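/- Let F ∈ L[X] be a polynomial of degree at most d ≥ 1, let A ≤ B be integers, D = B − A, M = max{|A|, |B|}, and let x_1, …, x_{d+1} be distinct integers in [A, B]. If H ≥ 0 is such that h(F(x_i)) ≤ H for every 1 ≤ i ≤ d+1, then h(F) ≤ (d+1)·H + D·log(D) + d·log(2M) + log(d+1). -/

import Mathlib

open NumberField Polynomial IsDedekindDomain Nat
open scoped Classical

/-- The integer-valued `𝔭`-adic valuation on a number field `L`, normalized so that a
uniformizer has valuation `1` (with the junk value `0` at `x = 0`). -/
noncomputable def intValOn {L : Type*} [Field L] [NumberField L]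
    (v : HeightOneSpectrum (𝓞 L)) (x : L) : ℤ :=
  if h : x = 0 then 0
  else -Multiplicative.toAdd (WithZero.unzero ((v.valuation L).ne_zero_iff.mpr h))

/-- The normalized `𝔭`-adic absolute value `‖x‖_𝔭 = (N𝔭)^{-v_𝔭(x)}`, i.e. the `d_v`-th power
`|x|_v^{d_v}` of the absolute value `|·|_v` normalized by `|p|_v = 1/p`
(where `d_v = [L_v : ℚ_p]` is the local degree); thus for every `x ∈ L`,
`log (finAbs v x) = d_v · log |x|_v`. -/
noncomputable def finAbs {L : Type*} [Field L] [NumberField L]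
    (v : HeightOneSpectrum (𝓞 L)) (x : L) : ℝ :=
  if x = 0 then 0 else (Ideal.absNorm v.asIdeal : ℝ) ^ (-(intValOn v x))

/-- `|P|_v = max_i |a_i|_v` for `P = Σ_i a_i X^i` and `v` an absolute value on `L`. -/
noncomputable def polyNorm {L : Type*} [Field L] (v : L → ℝ) (P : L[X]) : ℝ :=
  ⨆ i, v (P.coeff i)

/-- The absolute logarithmic Weil height `h(x) = Σ_v (d_v/d_L) log max{1, |x|_v}` of `x ∈ L`:
the finite-place part is written using `finAbs` (recall `log (finAbs v x) = d_v log |x|_v`),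
and for an infinite place `v`, `d_v` is `InfinitePlace.mult v`. -/
noncomputable def elemHeight {L : Type*} [Field L] [NumberField L] (x : L) : ℝ :=
  (1 / (Module.finrank ℚ L : ℝ)) *
    ((∑ᶠ v : HeightOneSpectrum (𝓞 L), Real.log (max 1 (finAbs v x))) +
      ∑ v : InfinitePlace L, (v.mult : ℝ) * Real.log (max 1 (v x)))

/-- The height `h(P) = Σ_v (d_v/d_L) log max{1, |P|_v}` of a polynomial `P ∈ L[X]`. -/
noncomputable def polyHeight {L : Type*} [Field L] [NumberField L] (P : L[X]) : ℝ :=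
  (1 / (Module.finrank ℚ L : ℝ)) *
    ((∑ᶠ v : HeightOneSpectrum (𝓞 L), Real.log (max 1 (polyNorm (finAbs v) P))) +
      ∑ v : InfinitePlace L, (v.mult : ℝ) * Real.log (max 1 (polyNorm (⇑v) P)))

/-- The projective height `Σ_v (d_v/d_L) log max_c |c|_v` of the coefficient tuple of a pair of
polynomials `(P, Q)` (not both zero); for `P, Q` coprime with `F = P/Q` this is the height
`h(F)` of the rational fraction `F`, independent of the chosen representation. -/
noncomputable def pairHeight {L : Type*} [Field L] [NumberField L] (P Q : L[X]) : ℝ :=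
  (1 / (Module.finrank ℚ L : ℝ)) *
    ((∑ᶠ v : HeightOneSpectrum (𝓞 L),
        Real.log (max (polyNorm (finAbs v) P) (polyNorm (finAbs v) Q))) +
      ∑ v : InfinitePlace L, (v.mult : ℝ) *
        Real.log (max (polyNorm (⇑v) P) (polyNorm (⇑v) Q)))

/-- `h°(x) = (1/d_L) log |N_{L/ℚ}(x)|` for a nonzero algebraic integer `x`. -/
noncomputable def normHeight {L : Type*} [Field L] [NumberField L] (x : 𝓞 L) : ℝ :=
  (1 / (Module.finrank ℚ L : ℝ)) * Real.log |(Algebra.norm ℤ x : ℝ)|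

section Aux
variable {L : Type*} [Field L] [NumberField L] (v : HeightOneSpectrum (𝓞 L))

lemma valuation_eq_ofAdd {x : L} (hx : x ≠ 0) :
    v.valuation L x = (WithZero.coe (Multiplicative.ofAdd (-(intValOn v x)))) := by
  simp only [intValOn, dif_neg hx, neg_neg, ofAdd_toAdd, WithZero.coe_unzero]

lemma one_lt_absNormV : (1:ℝ) < (Ideal.absNorm v.asIdeal : ℝ) := by
  have h0 : Ideal.absNorm v.asIdeal ≠ 0 := by
    rw [ne_eq, Ideal.absNorm_eq_zero_iff]
    exact v.ne_bot
  have h1 : Ideal.absNorm v.asIdeal ≠ 1 := by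
    rw [ne_eq, Ideal.absNorm_eq_one_iff]
    exact v.isPrime.ne_top
  exact_mod_cast by omega

lemma absNormV_pos : (0:ℝ) < (Ideal.absNorm v.asIdeal : ℝ) :=
  lt_trans one_pos (one_lt_absNormV v)

lemma finAbs_zero : finAbs v (0 : L) = 0 := by simp [finAbs]

lemma finAbs_of_ne_zero {x : L} (hx : x ≠ 0) :
    finAbs v x = (Ideal.absNorm v.asIdeal : ℝ) ^ (-(intValOn v x)) := by
  simp [finAbs, hx]

lemma finAbs_pos {x : L} (hx : x ≠ 0) : 0 < finAbs v x := by
  rw [finAbs_of_ne_zero v hx]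
  exact zpow_pos (absNormV_pos v) _

lemma finAbs_nonneg (x : L) : 0 ≤ finAbs v x := by
  rcases eq_or_ne x 0 with h | h
  · simp [h, finAbs_zero]
  · exact (finAbs_pos v h).le

lemma intValOn_one : intValOn v (1 : L) = 0 := by
  have h := valuation_eq_ofAdd v (one_ne_zero : (1:L) ≠ 0)
  rw [map_one] at h
  have h2 : (Multiplicative.ofAdd (-(intValOn v 1))) = (Multiplicative.ofAdd (0:ℤ)) := by
    rw [← WithZero.coe_inj, ← h, ofAdd_zero]; rfl
  have := Multiplicative.ofAdd.injective h2
  omega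

lemma finAbs_one : finAbs v (1 : L) = 1 := by
  rw [finAbs_of_ne_zero v one_ne_zero, intValOn_one, neg_zero, zpow_zero]

lemma intValOn_mul {x y : L} (hx : x ≠ 0) (hy : y ≠ 0) :
    intValOn v (x * y) = intValOn v x + intValOn v y := by
  have h := valuation_eq_ofAdd v (mul_ne_zero hx hy)
  rw [map_mul, valuation_eq_ofAdd v hx, valuation_eq_ofAdd v hy, ← WithZero.coe_mul,
    WithZero.coe_inj, ← ofAdd_add] at h
  have := Multiplicative.ofAdd.injective h
  omega

lemma finAbs_mul (x y : L) : finAbs v (x * y) = finAbs v x * finAbs v y := by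
  rcases eq_or_ne x 0 with h | hx; · simp [h, finAbs_zero]
  rcases eq_or_ne y 0 with h | hy; · simp [h, finAbs_zero]
  rw [finAbs_of_ne_zero v (mul_ne_zero hx hy), finAbs_of_ne_zero v hx, finAbs_of_ne_zero v hy,
    intValOn_mul v hx hy, neg_add, zpow_add₀ (absNormV_pos v).ne']

lemma finAbs_inv (x : L) : finAbs v x⁻¹ = (finAbs v x)⁻¹ := by
  rcases eq_or_ne x 0 with h | hx; · simp [h, finAbs_zero]
  have h1 : finAbs v x⁻¹ * finAbs v x = 1 := by
    rw [← finAbs_mul, inv_mul_cancel₀ hx, finAbs_one]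
  have h2 : finAbs v x ≠ 0 := (finAbs_pos v hx).ne'
  field_simp at h1 ⊢
  rw [h1]

lemma finAbs_le_finAbs {x y : L} (hy : y ≠ 0) (h : v.valuation L x ≤ v.valuation L y) :
    finAbs v x ≤ finAbs v y := by
  rcases eq_or_ne x 0 with h0 | hx
  · rw [h0, finAbs_zero]; exact (finAbs_pos v hy).le
  rw [valuation_eq_ofAdd v hx, valuation_eq_ofAdd v hy, WithZero.coe_le_coe,
    Multiplicative.ofAdd_le] at h
  rw [finAbs_of_ne_zero v hx, finAbs_of_ne_zero v hy]
  exact zpow_le_zpow_right₀ (one_lt_absNormV v).le h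

lemma finAbs_add_le (x y : L) : finAbs v (x + y) ≤ max (finAbs v x) (finAbs v y) := by
  rcases eq_or_ne x 0 with h0 | hx
  · simp [h0, le_max_right, finAbs_nonneg v y]
  rcases eq_or_ne y 0 with h0 | hy
  · simp [h0, le_max_left, finAbs_nonneg v x]
  rcases eq_or_ne (x + y) 0 with h0 | hxy
  · rw [h0, finAbs_zero]
    exact le_max_of_le_left (finAbs_nonneg v x)
  have h := (v.valuation L).map_add x y
  rcases max_cases (v.valuation L x) (v.valuation L y) with ⟨he, _⟩ | ⟨he, _⟩
  · rw [he] at h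
    exact le_max_of_le_left (finAbs_le_finAbs v hx h)
  · rw [he] at h
    exact le_max_of_le_right (finAbs_le_finAbs v hy h)

lemma finAbs_coe_le_one (a : 𝓞 L) : finAbs v (a : L) ≤ 1 := by
  rcases eq_or_ne a 0 with h | ha
  · simp [h, finAbs_zero]
  have hval : v.valuation L ((a : L)) ≤ v.valuation L (1 : L) := by
    rw [map_one, NumberField.RingOfIntegers.coe_eq_algebraMap]
    exact v.valuation_le_one a
  calc finAbs v (a : L) ≤ finAbs v 1 := finAbs_le_finAbs v one_ne_zero hval
  _ = 1 := finAbs_one v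

lemma finAbs_intCast_le_one (m : ℤ) : finAbs v ((m : ℤ) : L) ≤ 1 := by
  have : ((m : ℤ) : L) = ((m : 𝓞 L) : L) := by
    rw [NumberField.RingOfIntegers.coe_eq_algebraMap, map_intCast]
  rw [this]
  exact finAbs_coe_le_one v _

lemma intValOn_coe_count {a : 𝓞 L} (ha : a ≠ 0) :
    intValOn v (a : L) =
      ((Associates.mk v.asIdeal).count (Associates.mk (Ideal.span {a})).factors : ℤ) := by
  have hL : (a : L) ≠ 0 := by
    simpa [NumberField.RingOfIntegers.coe_eq_algebraMap] using ha
  have h := valuation_eq_ofAdd v hL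
  rw [NumberField.RingOfIntegers.coe_eq_algebraMap, v.valuation_of_algebraMap,
    HeightOneSpectrum.intValuation_apply, v.intValuationDef_if_neg ha] at h
  have := Multiplicative.ofAdd.injective (WithZero.coe_inj.mp h.symm)
  rw [NumberField.RingOfIntegers.coe_eq_algebraMap]
  omega

lemma intValOn_coe_nonneg (a : 𝓞 L) : 0 ≤ intValOn v (a : L) := by
  rcases eq_or_ne a 0 with h | ha
  · simp [h, NumberField.RingOfIntegers.coe_eq_algebraMap, intValOn]
  · rw [intValOn_coe_count v ha]; positivity

lemma dvd_of_count_ne_zero {a : 𝓞 L} (ha : a ≠ 0)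
    (h : intValOn v (a : L) ≠ 0) : v.asIdeal ∣ Ideal.span {a} := by
  have hI : (Ideal.span {a} : Ideal (𝓞 L)) ≠ 0 := by
    rw [Ne, Ideal.zero_eq_bot, Ideal.span_singleton_eq_bot]; exact ha
  rw [intValOn_coe_count v ha] at h
  exact (Associates.count_ne_zero_iff_dvd hI v.irreducible).mp (by exact_mod_cast h)

lemma finite_support_intValOn (a : 𝓞 L) (ha : a ≠ 0) :
    (Function.support fun v : HeightOneSpectrum (𝓞 L) =>
      (intValOn v (a : L) : ℝ) * Real.log (Ideal.absNorm v.asIdeal)).Finite := by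
  have hI : (Ideal.span {a} : Ideal (𝓞 L)) ≠ 0 := by
    rw [Ne, Ideal.zero_eq_bot, Ideal.span_singleton_eq_bot]; exact ha
  apply (Ideal.finite_factors hI).subset
  intro v hv
  simp only [Function.mem_support] at hv
  have h1 : intValOn v (a : L) ≠ 0 := by
    intro h0; apply hv; rw [h0]; simp
  exact dvd_of_count_ne_zero v ha h1

lemma finsum_count_log {a : 𝓞 L} (ha : a ≠ 0) :
    ∑ᶠ v : HeightOneSpectrum (𝓞 L),
        (intValOn v (a : L) : ℝ) * Real.log (Ideal.absNorm v.asIdeal) =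
      Real.log (Ideal.absNorm (Ideal.span {a} : Ideal (𝓞 L))) := by
  classical
  have hI : (Ideal.span {a} : Ideal (𝓞 L)) ≠ 0 := by
    rw [Ne, Ideal.zero_eq_bot, Ideal.span_singleton_eq_bot]; exact ha
  set I := (Ideal.span {a} : Ideal (𝓞 L)) with hIdef
  have hfin := Ideal.finite_factors hI
  set T := hfin.toFinset with hT
  have hsupp : (Function.support fun v : HeightOneSpectrum (𝓞 L) =>
      (intValOn v (a : L) : ℝ) * Real.log (Ideal.absNorm v.asIdeal)) ⊆ ↑T := by
    intro v hv
    simp only [Function.mem_support] at hv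
    have h1 : intValOn v (a : L) ≠ 0 := by
      intro h0; apply hv; rw [h0]; simp
    simp only [hT, Set.Finite.coe_toFinset, Set.mem_setOf_eq]
    exact dvd_of_count_ne_zero v ha h1
  rw [finsum_eq_sum_of_support_subset _ hsupp]
  -- factorization
  have hfact := Ideal.finprod_heightOneSpectrum_factorization hI
  have hms : (Function.mulSupport fun v : HeightOneSpectrum (𝓞 L) =>
      v.maxPowDividing I) ⊆ ↑T := by
    intro v hv
    simp only [Function.mem_mulSupport, HeightOneSpectrum.maxPowDividing] at hv
    simp only [hT, Set.Finite.coe_toFinset, Set.mem_setOf_eq]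
    by_contra hdvd
    have : (Associates.mk v.asIdeal).count (Associates.mk I).factors = 0 := by
      by_contra hc
      exact hdvd ((Associates.count_ne_zero_iff_dvd hI v.irreducible).mp hc)
    simp [this] at hv
  rw [finprod_eq_prod_of_mulSupport_subset _ hms] at hfact
  have h2 : Ideal.absNorm I = ∏ v ∈ T, Ideal.absNorm (v.maxPowDividing I) := by
    conv_lhs => rw [← hfact]
    exact map_prod Ideal.absNorm _ _
  have habs : (Ideal.absNorm I : ℝ) =
      ∏ v ∈ T, (Ideal.absNorm v.asIdeal : ℝ) ^
        ((Associates.mk v.asIdeal).count (Associates.mk I).factors) := by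
    rw [h2]
    push_cast
    refine Finset.prod_congr rfl fun v _ => ?_
    rw [HeightOneSpectrum.maxPowDividing, map_pow]
    push_cast; ring
  rw [habs, Real.log_prod]
  · refine Finset.sum_congr rfl fun v _ => ?_
    rw [Real.log_pow, intValOn_coe_count v ha]
    push_cast; ring
  · intro v _
    exact (pow_pos (absNormV_pos v) _).ne'

lemma finsum_intCast_log (N : ℤ) (hN : N ≠ 0) :
    ∑ᶠ v : HeightOneSpectrum (𝓞 L),
        (intValOn v ((N : ℤ) : L) : ℝ) * Real.log (Ideal.absNorm v.asIdeal) =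
      (Module.finrank ℚ L : ℝ) * Real.log |(N : ℝ)| := by
  have hcast : (((N : 𝓞 L) : L)) = ((N : ℤ) : L) := by
    rw [NumberField.RingOfIntegers.coe_eq_algebraMap, map_intCast]
  have ha : (N : 𝓞 L) ≠ 0 := by
    simpa using (Int.cast_injective (α := 𝓞 L)).ne_iff.mpr hN
  have h := finsum_count_log (L := L) ha
  simp only [hcast] at h
  rw [h, Ideal.absNorm_span_singleton]
  have : (N : 𝓞 L) = algebraMap ℤ (𝓞 L) N := by simp
  rw [this, Algebra.norm_algebraMap_of_basis (Module.Free.chooseBasis ℤ (𝓞 L))]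
  have hcard : Fintype.card (Module.Free.ChooseBasisIndex ℤ (𝓞 L)) = Module.finrank ℚ L := by
    rw [← Module.finrank_eq_card_chooseBasisIndex, NumberField.RingOfIntegers.rank L]
  have h3 : ((N ^ Fintype.card (Module.Free.ChooseBasisIndex ℤ (𝓞 L))).natAbs : ℝ) =
      |(N : ℝ)| ^ (Module.finrank ℚ L) := by
    rw [← hcard]
    push_cast [Int.natAbs_pow]
    congr 1
    rw [Nat.cast_natAbs, Int.cast_abs]
  rw [h3, Real.log_pow]

lemma finAbs_le_one_of_lt_one {b : 𝓞 L} (hb : b ≠ 0) (h : finAbs v (b : L) < 1) :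
    v.asIdeal ∣ Ideal.span {b} := by
  have hbL : (b : L) ≠ 0 := by
    simpa [NumberField.RingOfIntegers.coe_eq_algebraMap] using hb
  have h0 : 0 < intValOn v (b : L) := by
    by_contra hc
    push_neg at hc
    have h1 : intValOn v (b : L) = 0 :=
      le_antisymm hc (intValOn_coe_nonneg v b)
    rw [finAbs_of_ne_zero v hbL, h1] at h
    simp at h
  apply dvd_of_count_ne_zero v hb h0.ne'

lemma finite_one_lt_finAbs (y : L) :
    {v : HeightOneSpectrum (𝓞 L) | 1 < finAbs v y}.Finite := by
  rcases eq_or_ne y 0 with rfl | hy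
  · convert Set.finite_empty
    ext v; simp [finAbs_zero]
  obtain ⟨a, b, hbmem, hab⟩ := IsFractionRing.div_surjective (A := 𝓞 L) y
  have hb : b ≠ 0 := nonZeroDivisors.ne_zero hbmem
  have hbL : ((b : 𝓞 L) : L) ≠ 0 := by
    simpa [NumberField.RingOfIntegers.coe_eq_algebraMap] using hb
  have hIb : (Ideal.span {b} : Ideal (𝓞 L)) ≠ 0 := by
    rw [Ne, Ideal.zero_eq_bot, Ideal.span_singleton_eq_bot]; exact hb
  apply (Ideal.finite_factors hIb).subset
  intro v hv
  simp only [Set.mem_setOf_eq] at hv ⊢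
  apply finAbs_le_one_of_lt_one v hb
  by_contra hc
  push_neg at hc
  have h1 : finAbs v y * finAbs v (b : L) = finAbs v (a : L) := by
    rw [← finAbs_mul, ← hab, ← NumberField.RingOfIntegers.coe_eq_algebraMap,
      ← NumberField.RingOfIntegers.coe_eq_algebraMap, div_mul_cancel₀ _ hbL]
  have h2 : finAbs v (a : L) ≤ 1 := finAbs_coe_le_one v a
  nlinarith [finAbs_pos v hbL, finAbs_nonneg v y]

lemma support_log_max_finAbs_finite (y : L) :
    (Function.support fun v : HeightOneSpectrum (𝓞 L) =>
      Real.log (max 1 (finAbs v y))).Finite := by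
  apply (finite_one_lt_finAbs y).subset
  intro v hv
  simp only [Function.mem_support] at hv
  simp only [Set.mem_setOf_eq]
  by_contra hc
  push_neg at hc
  apply hv
  rw [max_eq_left hc, Real.log_one]

lemma prod_dvd_factorial {ι : Type*} [DecidableEq ι] {s : Finset ι} {f : ι → ℕ} {a : ℕ}
    (hinj : Set.InjOn f s) (hmem : ∀ j ∈ s, f j ∈ Finset.Icc 1 a) :
    (∏ j ∈ s, f j) ∣ a ! := by
  have h1 : ∏ t ∈ s.image f, (fun t => t) t = ∏ j ∈ s, f j :=
    Finset.prod_image fun x hx y hy h => hinj hx hy h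
  simp only at h1
  rw [← h1]
  have hsub : s.image f ⊆ Finset.Icc 1 a := by
    intro t ht
    obtain ⟨j, hj, rfl⟩ := Finset.mem_image.mp ht
    exact hmem j hj
  have h2 : (∏ t ∈ s.image f, t) ∣ ∏ t ∈ Finset.Icc 1 a, t :=
    Finset.prod_dvd_prod_of_subset _ _ _ hsub
  have h3 : ∏ t ∈ Finset.Icc 1 a, t = a ! := by
    have : Finset.Icc 1 a = Finset.Ico 1 (a + 1) := by
      rw [Finset.Ico_add_one_right_eq_Icc]
    rw [this, Finset.prod_Ico_id_eq_factorial]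
  rwa [h3] at h2

lemma prod_diff_dvd_factorial {n : ℕ} (x : Fin n → ℤ) (hinj : Function.Injective x)
    {A B : ℤ} (hx : ∀ i, x i ∈ Set.Icc A B) {D : ℕ} (hD : (D : ℤ) = B - A) (i : Fin n) :
    (∏ j ∈ Finset.univ.erase i, (x i - x j)) ∣ ((D ! : ℕ) : ℤ) := by
  classical
  rw [← Int.natAbs_dvd]
  have habs : (∏ j ∈ Finset.univ.erase i, (x i - x j)).natAbs =
      ∏ j ∈ Finset.univ.erase i, (x i - x j).natAbs :=
    map_prod Int.natAbsHom _ _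
  rw [habs]
  set s := (Finset.univ : Finset (Fin n)).erase i
  set a := (x i - A).toNat with hadef
  set b := (B - x i).toNat with hbdef
  have hiA := (hx i).1
  have hiB := (hx i).2
  have hab : a + b = D := by omega
  have hsplit : ∏ j ∈ s, (x i - x j).natAbs =
      (∏ j ∈ s.filter (fun j => x j < x i), (x i - x j).natAbs) *
      ∏ j ∈ s.filter (fun j => ¬ x j < x i), (x i - x j).natAbs :=
    (Finset.prod_filter_mul_prod_filter_not s _ _).symm
  have hne : ∀ j ∈ s, x j ≠ x i := by
    intro j hj
    have := Finset.ne_of_mem_erase hj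
    exact fun h => this (hinj h)
  have h1 : (∏ j ∈ s.filter (fun j => x j < x i), (x i - x j).natAbs) ∣ a ! := by
    apply prod_dvd_factorial (f := fun j => (x i - x j).natAbs)
    · intro j hj k hk h
      simp only [Finset.mem_coe, Finset.mem_filter] at hj hk
      dsimp only at h
      have hj2 := hj.2; have hk2 := hk.2
      have h' : ((x i - x j).natAbs : ℤ) = ((x i - x k).natAbs : ℤ) := by exact_mod_cast h
      rw [Int.natAbs_of_nonneg (by omega), Int.natAbs_of_nonneg (by omega)] at h'
      exact hinj (by omega)
    · intro j hj
      simp only [Finset.mem_filter] at hj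
      have h2 := (hx j).1
      have h5 := hj.2
      rw [Finset.mem_Icc]
      rcases Int.natAbs_eq (x i - x j) with he | he <;> omega
  have h2 : (∏ j ∈ s.filter (fun j => ¬ x j < x i), (x i - x j).natAbs) ∣ b ! := by
    apply prod_dvd_factorial (f := fun j => (x i - x j).natAbs)
    · intro j hj k hk h
      simp only [Finset.mem_coe, Finset.mem_filter] at hj hk
      dsimp only at h
      have hj1 := hne j hj.1; have hk1 := hne k hk.1
      have hj2 := hj.2; have hk2 := hk.2
      have h' : ((x i - x j).natAbs : ℤ) = ((x i - x k).natAbs : ℤ) := by exact_mod_cast h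
      rw [← Int.natAbs_neg (x i - x j), ← Int.natAbs_neg (x i - x k)] at h'
      rw [Int.natAbs_of_nonneg (by omega), Int.natAbs_of_nonneg (by omega)] at h'
      exact hinj (by omega)
    · intro j hj
      simp only [Finset.mem_filter] at hj
      have h3 := (hx j).2
      have h4 := hne j hj.1
      have h5 := hj.2
      rw [Finset.mem_Icc]
      rcases Int.natAbs_eq (x i - x j) with he | he <;> omega
  apply Int.natCast_dvd_natCast.mpr
  calc ∏ j ∈ s, (x i - x j).natAbs
      = _ * _ := hsplit
    _ ∣ a ! * b ! := mul_dvd_mul h1 h2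
    _ ∣ (a + b)! := Nat.factorial_mul_factorial_dvd_factorial_add a b
    _ = D ! := by rw [hab]

lemma abs_coeff_prod_X_sub_C_le {ι : Type*} (s : Finset ι) (c : ι → ℤ) :
    ∀ k, |(∏ j ∈ s, (X - C (c j))).coeff k| ≤ ∏ j ∈ s, (1 + |c j|) := by
  classical
  induction s using Finset.cons_induction with
  | empty =>
    intro k
    rcases k with _ | k <;> simp [Polynomial.coeff_one]
  | cons i s hi ih =>
    intro k
    rw [Finset.prod_cons, Finset.prod_cons]
    set P := ∏ j ∈ s, (X - C (c j)) with hP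
    have hB : (0:ℤ) ≤ ∏ j ∈ s, (1 + |c j|) :=
      Finset.prod_nonneg fun j _ => by positivity
    have hexp : ((X - C (c i)) * P).coeff k
        = (X * P).coeff k - c i * P.coeff k := by
      rw [sub_mul, Polynomial.coeff_sub, Polynomial.coeff_C_mul]
    cases k with
    | zero =>
      rw [hexp]
      have hX0 : (X * P).coeff 0 = 0 := by
        rw [Polynomial.mul_coeff_zero, Polynomial.coeff_X_zero, zero_mul]
      rw [hX0, zero_sub, abs_neg, abs_mul]
      calc |c i| * |P.coeff 0| ≤ |c i| * ∏ j ∈ s, (1 + |c j|) := by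
            apply mul_le_mul_of_nonneg_left (ih 0) (abs_nonneg _)
        _ ≤ (1 + |c i|) * ∏ j ∈ s, (1 + |c j|) := by nlinarith
    | succ m =>
      rw [hexp, Polynomial.coeff_X_mul]
      calc |P.coeff m - c i * P.coeff (m + 1)|
          ≤ |P.coeff m| + |c i| * |P.coeff (m + 1)| := by
            rw [← abs_mul]; exact abs_sub _ _
        _ ≤ ∏ j ∈ s, (1 + |c j|) + |c i| * ∏ j ∈ s, (1 + |c j|) := by
            have := ih m
            have h2 := mul_le_mul_of_nonneg_left (ih (m+1)) (abs_nonneg (c i))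
            linarith
        _ = (1 + |c i|) * ∏ j ∈ s, (1 + |c j|) := by ring

lemma log_factorial_le (D : ℕ) : Real.log ((D ! : ℕ) : ℝ) ≤ (D : ℝ) * Real.log D := by
  rcases Nat.eq_zero_or_pos D with rfl | hD
  · simp
  have h1 : ((D ! : ℕ) : ℝ) ≤ ((D ^ D : ℕ) : ℝ) := by
    exact_mod_cast Nat.factorial_le_pow D
  calc Real.log ((D ! : ℕ) : ℝ) ≤ Real.log (((D : ℕ) : ℝ) ^ D) := by
        apply Real.log_le_log (by exact_mod_cast D.factorial_pos)
        push_cast at h1 ⊢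
        exact h1
    _ = (D : ℝ) * Real.log D := by rw [Real.log_pow]

lemma finAbs_sum_le {ι : Type*} (s : Finset ι) (f : ι → L) {C : ℝ} (hC : 0 ≤ C)
    (h : ∀ i ∈ s, finAbs v (f i) ≤ C) : finAbs v (∑ i ∈ s, f i) ≤ C := by
  classical
  induction s using Finset.cons_induction with
  | empty => simpa [finAbs_zero] using hC
  | cons i s hi ih =>
    rw [Finset.sum_cons]
    refine le_trans (finAbs_add_le v _ _) (max_le (h i (Finset.mem_cons_self i s)) (ih ?_))
    exact fun j hj => h j (Finset.mem_cons_of_mem hj)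

lemma infPlace_intCast (w : InfinitePlace L) (m : ℤ) : w ((m : ℤ) : L) = |(m : ℝ)| := by
  rw [← NumberField.InfinitePlace.norm_embedding_eq, map_intCast, Complex.norm_intCast]

lemma infPlace_sum_le {ι : Type*} (w : InfinitePlace L) (s : Finset ι) (f : ι → L) :
    w (∑ i ∈ s, f i) ≤ ∑ i ∈ s, w (f i) := by
  rw [← NumberField.InfinitePlace.norm_embedding_eq, map_sum]
  refine le_trans (norm_sum_le _ _) ?_
  refine Finset.sum_le_sum fun i _ => ?_
  rw [NumberField.InfinitePlace.norm_embedding_eq]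

lemma one_le_prod_real {ι : Type*} (s : Finset ι) (g : ι → ℝ) (h : ∀ j ∈ s, 1 ≤ g j) :
    1 ≤ ∏ j ∈ s, g j := by
  calc (1:ℝ) = ∏ _j ∈ s, 1 := by rw [Finset.prod_const_one]
  _ ≤ ∏ j ∈ s, g j := Finset.prod_le_prod (fun j _ => zero_le_one) h

lemma single_le_prod_real {ι : Type*} [DecidableEq ι] (s : Finset ι) (g : ι → ℝ)
    (h : ∀ j ∈ s, 1 ≤ g j) {i : ι} (hi : i ∈ s) : g i ≤ ∏ j ∈ s, g j := by
  rw [← Finset.mul_prod_erase s g hi]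
  have h1 : 1 ≤ ∏ j ∈ s.erase i, g j :=
    one_le_prod_real _ _ fun j hj => h j (Finset.mem_of_mem_erase hj)
  nlinarith [le_trans zero_le_one (h i hi)]

end Aux

section PlaceBounds
variable {L : Type*} [Field L] [NumberField L]

lemma finite_place_bound (v : HeightOneSpectrum (𝓞 L)) (F : L[X]) {m : ℕ}
    (t : Fin m → L) (den : Fin m → ℤ) (Nl : Fin m → L[X]) (Dfac : ℤ) (hDfac : Dfac ≠ 0)
    (hdvd : ∀ i, den i ∣ Dfac)
    (hInt : ∀ i k, ∃ c : ℤ, (Nl i).coeff k = ((c : ℤ) : L))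
    (hcoeff : ∀ k, F.coeff k = ∑ i, F.eval (t i) * (((den i : ℤ) : L)⁻¹ * (Nl i).coeff k)) :
    Real.log (max 1 (polyNorm (finAbs v) F)) ≤
      (∑ i, Real.log (max 1 (finAbs v (F.eval (t i))))) +
        (intValOn v ((Dfac : ℤ) : L) : ℝ) * Real.log (Ideal.absNorm v.asIdeal) := by
  classical
  have hDL : ((Dfac : ℤ) : L) ≠ 0 := Int.cast_ne_zero.mpr hDfac
  have hfD_pos : 0 < finAbs v ((Dfac : ℤ) : L) := finAbs_pos v hDL
  have hfD_le : finAbs v ((Dfac : ℤ) : L) ≤ 1 := finAbs_intCast_le_one v Dfac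
  set P : ℝ := ∏ i, max 1 (finAbs v (F.eval (t i))) with hPdef
  have hP1 : (1:ℝ) ≤ P := one_le_prod_real _ _ fun i _ => le_max_left _ _
  set Cv : ℝ := P * (finAbs v ((Dfac : ℤ) : L))⁻¹ with hCv
  have hinv1 : (1:ℝ) ≤ (finAbs v ((Dfac : ℤ) : L))⁻¹ := (one_le_inv₀ hfD_pos).mpr hfD_le
  have hCv1 : (1:ℝ) ≤ Cv := by
    calc (1:ℝ) = 1 * 1 := by ring
    _ ≤ P * (finAbs v ((Dfac : ℤ) : L))⁻¹ := by
        apply mul_le_mul hP1 hinv1 zero_le_one (le_trans zero_le_one hP1)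
  have hterm : ∀ k, finAbs v (F.coeff k) ≤ Cv := by
    intro k
    rw [hcoeff k]
    apply finAbs_sum_le v _ _ (le_trans zero_le_one hCv1)
    intro i _
    rw [finAbs_mul, finAbs_mul]
    have h1 : finAbs v (F.eval (t i)) ≤ P := by
      refine le_trans (le_max_right 1 _) ?_
      rw [hPdef]
      exact single_le_prod_real _ (fun j => max 1 (finAbs v (F.eval (t j))))
        (fun j _ => le_max_left _ _) (Finset.mem_univ i)
    have h2 : finAbs v (((den i : ℤ) : L))⁻¹ ≤ (finAbs v ((Dfac : ℤ) : L))⁻¹ := by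
      rw [finAbs_inv]
      obtain ⟨c, hc⟩ := hdvd i
      have hdenL : ((den i : ℤ) : L) ≠ 0 := Int.cast_ne_zero.mpr fun h0 => hDfac (by
        rw [hc, h0, zero_mul])
      have hfden_pos : 0 < finAbs v ((den i : ℤ) : L) := finAbs_pos v hdenL
      have hle : finAbs v ((Dfac : ℤ) : L) ≤ finAbs v ((den i : ℤ) : L) := by
        have : ((Dfac : ℤ) : L) = ((den i : ℤ) : L) * ((c : ℤ) : L) := by
          rw [hc]; push_cast; ring
        rw [this, finAbs_mul]
        calc finAbs v ((den i : ℤ) : L) * finAbs v ((c : ℤ) : L)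
            ≤ finAbs v ((den i : ℤ) : L) * 1 :=
              mul_le_mul_of_nonneg_left (finAbs_intCast_le_one v c) hfden_pos.le
          _ = _ := mul_one _
      exact inv_anti₀ hfD_pos hle
    have h3 : finAbs v ((Nl i).coeff k) ≤ 1 := by
      obtain ⟨c, hc⟩ := hInt i k
      rw [hc]; exact finAbs_intCast_le_one v c
    calc finAbs v (F.eval (t i)) * (finAbs v (((den i : ℤ) : L))⁻¹ * finAbs v ((Nl i).coeff k))
        ≤ P * ((finAbs v ((Dfac : ℤ) : L))⁻¹ * 1) := by
          apply mul_le_mul h1 _ _ (le_trans zero_le_one hP1)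
          · exact mul_le_mul h2 h3 (finAbs_nonneg v _) (le_trans zero_le_one hinv1)
          · exact mul_nonneg (finAbs_nonneg v _) (finAbs_nonneg v _)
      _ = Cv := by rw [mul_one]
  have hpoly : polyNorm (finAbs v) F ≤ Cv := ciSup_le hterm
  have hmax : max 1 (polyNorm (finAbs v) F) ≤ Cv := max_le hCv1 hpoly
  have hlog := Real.log_le_log (lt_of_lt_of_le one_pos (le_max_left _ _)) hmax
  refine le_trans hlog ?_
  rw [hCv, Real.log_mul (by positivity) (by positivity), hPdef, Real.log_prod
    (fun i _ => by positivity)]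
  apply _root_.add_le_add
  · refine Finset.sum_le_sum fun i _ => ?_
    exact Real.log_le_log (by positivity) le_rfl
  · rw [Real.log_inv, finAbs_of_ne_zero v hDL, Real.log_zpow]
    push_cast
    ring_nf
    exact le_refl _


lemma infinite_place_bound (w : InfinitePlace L) (F : L[X]) {m : ℕ} (hm : 0 < m)
    (t : Fin m → L) (den : Fin m → ℤ) (hden : ∀ i, den i ≠ 0) (Nl : Fin m → L[X])
    (Cb : ℝ) (hCb : 1 ≤ Cb)
    (hNl : ∀ i k, ∃ c : ℤ, (Nl i).coeff k = ((c : ℤ) : L) ∧ |(c : ℝ)| ≤ Cb)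
    (hcoeff : ∀ k, F.coeff k = ∑ i, F.eval (t i) * (((den i : ℤ) : L)⁻¹ * (Nl i).coeff k)) :
    Real.log (max 1 (polyNorm (⇑w) F)) ≤
      (∑ i, Real.log (max 1 (w (F.eval (t i))))) + (Real.log m + Real.log Cb) := by
  classical
  set P : ℝ := ∏ i, max 1 (w (F.eval (t i))) with hPdef
  have hP1 : (1:ℝ) ≤ P := one_le_prod_real _ _ fun i _ => le_max_left _ _
  have hm1 : (1:ℝ) ≤ (m:ℝ) := by exact_mod_cast hm
  set Cw : ℝ := P * ((m:ℝ) * Cb) with hCw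
  have hCw1 : (1:ℝ) ≤ Cw := by
    rw [hCw]
    calc (1:ℝ) = 1 * (1 * 1) := by ring
    _ ≤ P * ((m:ℝ) * Cb) := by
        apply mul_le_mul hP1 (mul_le_mul hm1 hCb zero_le_one (le_trans zero_le_one hm1))
          (by positivity) (le_trans zero_le_one hP1)
  have hterm : ∀ k, w (F.coeff k) ≤ Cw := by
    intro k
    rw [hcoeff k]
    refine le_trans (infPlace_sum_le w _ _) ?_
    have hbound : ∀ i ∈ Finset.univ, w (F.eval (t i) * (((den i : ℤ) : L)⁻¹ * (Nl i).coeff k))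
        ≤ P * Cb := by
      intro i _
      rw [map_mul, map_mul]
      have h1 : w (F.eval (t i)) ≤ P := by
        refine le_trans (le_max_right 1 _) ?_
        rw [hPdef]
        exact single_le_prod_real _ (fun j => max 1 (w (F.eval (t j))))
          (fun j _ => le_max_left _ _) (Finset.mem_univ i)
      have h2 : w ((((den i : ℤ) : L))⁻¹) ≤ 1 := by
        rw [map_inv₀, infPlace_intCast]
        have : (1:ℝ) ≤ |((den i : ℤ) : ℝ)| := by
          exact_mod_cast Int.one_le_abs (hden i)
        rw [inv_le_one_iff₀]
        right; exact this
      have h3 : w ((Nl i).coeff k) ≤ Cb := by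
        obtain ⟨c, hc1, hc2⟩ := hNl i k
        rw [hc1, infPlace_intCast]
        exact hc2
      calc w (F.eval (t i)) * (w ((((den i : ℤ) : L))⁻¹) * w ((Nl i).coeff k))
          ≤ P * (1 * Cb) := by
            apply mul_le_mul h1 _ _ (le_trans zero_le_one hP1)
            · exact mul_le_mul h2 h3 (apply_nonneg w _) zero_le_one
            · exact mul_nonneg (apply_nonneg w _) (apply_nonneg w _)
        _ = P * Cb := by ring
    calc ∑ i, w (F.eval (t i) * (((den i : ℤ) : L)⁻¹ * (Nl i).coeff k))
        ≤ ∑ _i : Fin m, P * Cb := Finset.sum_le_sum hbound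
      _ = (m:ℝ) * (P * Cb) := by
          rw [Finset.sum_const, Finset.card_univ, Fintype.card_fin, nsmul_eq_mul]
      _ = Cw := by rw [hCw]; ring
  have hpoly : polyNorm (⇑w) F ≤ Cw := ciSup_le hterm
  have hlog := Real.log_le_log (lt_of_lt_of_le one_pos (le_max_left _ _))
    (max_le hCw1 hpoly)
  refine le_trans hlog ?_
  rw [hCw, Real.log_mul (by positivity) (by positivity),
    Real.log_mul (by positivity) (by positivity), hPdef,
    Real.log_prod (fun i _ => by positivity)]

end PlaceBounds

/-- Let `F ∈ L[X]` of degree at most `d ≥ 1`, let `x 0, …, x d` be distinct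
integers in `[A, B]`, `D = B − A`, `M = max{|A|, |B|}`. If `H ≥ 0` and `h(F(x_i)) ≤ H` for all
`i`, then `h(F) ≤ (d+1)·H + D·log D + d·log(2M) + log(d+1)`. -/
theorem stmt_2 {L : Type*} [Field L] [NumberField L]
    (d : ℕ) (hd : 1 ≤ d) (F : L[X]) (hdeg : F.natDegree ≤ d)
    (A B : ℤ) (hAB : A ≤ B) (D : ℕ) (hD : (D : ℤ) = B - A) (M : ℤ) (hM : M = max |A| |B|)
    (x : Fin (d + 1) → ℤ) (hinj : Function.Injective x) (hx : ∀ i, x i ∈ Set.Icc A B)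
    (H : ℝ) (hH : 0 ≤ H)
    (hFx : ∀ i, elemHeight (F.eval ((x i : ℤ) : L)) ≤ H) :
    polyHeight F ≤ ((d : ℝ) + 1) * H + (D : ℝ) * Real.log (D : ℝ)
      + (d : ℝ) * Real.log (2 * (M : ℝ)) + Real.log ((d : ℝ) + 1) := by
  classical
  have hn0 : (0:ℝ) < (Module.finrank ℚ L : ℝ) := by exact_mod_cast Module.finrank_pos
  set n : ℝ := (Module.finrank ℚ L : ℝ) with hndef
  -- numeric prelims
  have hxne : x ⟨0, by omega⟩ ≠ x ⟨1, by omega⟩ := by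
    intro h
    have := hinj h
    simp only [Fin.mk.injEq] at this
    omega
  have hABlt : A < B := by
    rcases lt_or_eq_of_le hAB with h | h
    · exact h
    · exfalso
      have h0 := hx ⟨0, by omega⟩
      have h1 := hx ⟨1, by omega⟩
      rw [Set.mem_Icc] at h0 h1
      exact hxne (by omega)
  have hD1 : 1 ≤ D := by omega
  have hMa : |A| ≤ M := by rw [hM]; exact le_max_left _ _
  have hMb : |B| ≤ M := by rw [hM]; exact le_max_right _ _
  have hM1 : 1 ≤ M := by
    by_contra hc
    push_neg at hc
    have h1 : A = 0 := by
      have := abs_nonneg A; have := le_abs_self A; have := neg_abs_le A; omega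
    have h2 : B = 0 := by
      have := abs_nonneg B; have := le_abs_self B; have := neg_abs_le B; omega
    omega
  have hMr1 : (1:ℝ) ≤ (M:ℝ) := by exact_mod_cast hM1
  have habsx : ∀ i, |x i| ≤ M := by
    intro i
    have h0 := hx i; rw [Set.mem_Icc] at h0
    have h1 := le_abs_self B; have h2 := neg_abs_le A
    rw [abs_le]; omega
  -- objects
  set t : Fin (d+1) → L := fun i => ((x i : ℤ) : L) with htdef
  set den : Fin (d+1) → ℤ := fun i => ∏ j ∈ Finset.univ.erase i, (x i - x j) with hdendef
  set Pint : Fin (d+1) → ℤ[X] := fun i => ∏ j ∈ Finset.univ.erase i, (X - C (x j)) with hPintdef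
  set Nl : Fin (d+1) → L[X] := fun i => (Pint i).map (Int.castRingHom L) with hNldef
  set NfD : ℤ := ((D ! : ℕ) : ℤ) with hNfDdef
  have hden_ne : ∀ i, den i ≠ 0 := by
    intro i
    rw [hdendef]
    dsimp only
    rw [Finset.prod_ne_zero_iff]
    intro j hj
    have hji : j ≠ i := Finset.ne_of_mem_erase hj
    intro h0
    exact hji (hinj (by omega))
  have hden_dvd : ∀ i, den i ∣ NfD := fun i => prod_diff_dvd_factorial x hinj hx hD i
  have hDfac_ne : NfD ≠ 0 := by
    rw [hNfDdef]; exact_mod_cast (Nat.factorial_pos D).ne'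
  -- Lagrange interpolation
  have htinjOn : Set.InjOn t ↑(Finset.univ : Finset (Fin (d+1))) := by
    intro i _ j _ h
    apply hinj
    rw [htdef] at h; dsimp only at h
    exact_mod_cast h
  have hdeglt : F.degree < ((Finset.univ : Finset (Fin (d+1))).card : ℕ) := by
    rw [Finset.card_univ, Fintype.card_fin]
    apply lt_of_le_of_lt Polynomial.degree_le_natDegree
    exact_mod_cast Nat.lt_succ_of_le hdeg
  have hFL := Lagrange.eq_interpolate htinjOn hdeglt
  rw [Lagrange.interpolate_apply] at hFL
  have hbasis : ∀ i, Lagrange.basis Finset.univ t i = C (((den i : ℤ) : L))⁻¹ * Nl i := by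
    intro i
    have e1 : ∏ j ∈ Finset.univ.erase i, (t i - t j) = ((den i : ℤ) : L) := by
      rw [hdendef]; dsimp only
      push_cast
      rfl
    have e2 : ∏ j ∈ Finset.univ.erase i, (X - C (t j)) = Nl i := by
      rw [hNldef, hPintdef]; dsimp only
      rw [Polynomial.map_prod]
      refine Finset.prod_congr rfl fun j _ => ?_
      rw [Polynomial.map_sub, Polynomial.map_X, Polynomial.map_C]
      norm_cast
    unfold Lagrange.basis Lagrange.basisDivisor
    rw [Finset.prod_mul_distrib, e2, ← map_prod, Finset.prod_inv_distrib, e1]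
  have hcoeff : ∀ k, F.coeff k =
      ∑ i, F.eval (t i) * ((((den i : ℤ) : L))⁻¹ * (Nl i).coeff k) := by
    intro k
    conv_lhs => rw [hFL]
    rw [Polynomial.finset_sum_coeff]
    refine Finset.sum_congr rfl fun i _ => ?_
    rw [hbasis i, Polynomial.coeff_C_mul, Polynomial.coeff_C_mul]
  have hInt : ∀ i k, ∃ c : ℤ, (Nl i).coeff k = ((c : ℤ) : L) := by
    intro i k
    refine ⟨(Pint i).coeff k, ?_⟩
    rw [hNldef]; dsimp only
    rw [Polynomial.coeff_map]
    simp
  have hNlbound : ∀ i k, ∃ c : ℤ, (Nl i).coeff k = ((c : ℤ) : L) ∧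
      |(c : ℝ)| ≤ (2*(M:ℝ))^d := by
    intro i k
    refine ⟨(Pint i).coeff k, ?_, ?_⟩
    · rw [hNldef]; dsimp only
      rw [Polynomial.coeff_map]
      simp
    · have h1 : |(Pint i).coeff k| ≤ (2*M)^d := by
        rw [hPintdef]; dsimp only
        refine le_trans (abs_coeff_prod_X_sub_C_le _ _ k) ?_
        calc ∏ j ∈ Finset.univ.erase i, (1 + |x j|)
            ≤ ∏ _j ∈ Finset.univ.erase i, (2*M) :=
              Finset.prod_le_prod (fun j _ => by positivity)
                (fun j _ => by have := habsx j; omega)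
          _ = (2*M) ^ d := by
              rw [Finset.prod_const, Finset.card_erase_of_mem (Finset.mem_univ i),
                Finset.card_univ, Fintype.card_fin]
              norm_num
      exact_mod_cast h1
  -- per-place bounds
  have hfinv := fun v => finite_place_bound v F t den Nl NfD hDfac_ne hden_dvd hInt hcoeff
  have h2M1 : (1:ℝ) ≤ (2*(M:ℝ))^d := one_le_pow₀ (by linarith)
  have hinfw := fun w : InfinitePlace L => infinite_place_bound w F (Nat.succ_pos d) t den
    hden_ne Nl ((2*(M:ℝ))^d) h2M1 hNlbound hcoeff
  -- finite-part assembly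
  set gF : HeightOneSpectrum (𝓞 L) → ℝ :=
    fun v => Real.log (max 1 (polyNorm (finAbs v) F)) with hgF
  set gi : Fin (d+1) → HeightOneSpectrum (𝓞 L) → ℝ :=
    fun i v => Real.log (max 1 (finAbs v (F.eval (t i)))) with hgi
  set gD : HeightOneSpectrum (𝓞 L) → ℝ :=
    fun v => (intValOn v ((NfD : ℤ) : L) : ℝ) * Real.log (Ideal.absNorm v.asIdeal) with hgD
  have hcastD : (((NfD : ℤ) : 𝓞 L) : L) = ((NfD : ℤ) : L) := by
    rw [NumberField.RingOfIntegers.coe_eq_algebraMap, map_intCast]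
  have hgi_fin : ∀ i, (Function.support (gi i)).Finite := fun i =>
    support_log_max_finAbs_finite (F.eval (t i))
  have hgD_fin : (Function.support gD).Finite := by
    have := finite_support_intValOn (L := L) ((NfD : ℤ) : 𝓞 L)
      (by simpa using (Int.cast_injective (α := 𝓞 L)).ne_iff.mpr hDfac_ne)
    rw [hgD]
    simpa [hcastD] using this
  have hgD_nonneg : ∀ v, 0 ≤ gD v := by
    intro v
    rw [hgD]
    apply mul_nonneg
    · rw [← hcastD]
      exact_mod_cast intValOn_coe_nonneg v _
    · exact Real.log_nonneg (one_lt_absNormV v).le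
  have hgi_nonneg : ∀ i v, 0 ≤ gi i v := fun i v =>
    Real.log_nonneg (le_max_left _ _)
  have hgF_nonneg : ∀ v, 0 ≤ gF v := fun v => Real.log_nonneg (le_max_left _ _)
  have hgD_sum : ∑ᶠ v, gD v = n * Real.log ((D ! : ℕ) : ℝ) := by
    rw [hgD]
    have := finsum_intCast_log (L := L) NfD hDfac_ne
    rw [this, hNfDdef]
    congr 1
    rw [abs_of_nonneg (by positivity)]
    norm_num
  have hUfin : (Function.support gD ∪ ⋃ i, Function.support (gi i)).Finite :=
    hgD_fin.union (Set.finite_iUnion hgi_fin)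
  set T : Finset (HeightOneSpectrum (𝓞 L)) := hUfin.toFinset with hT
  have hsubgD : Function.support gD ⊆ ↑T := by
    rw [hT]; intro v hv; simp only [Set.Finite.coe_toFinset]; exact Or.inl hv
  have hsubgi : ∀ i, Function.support (gi i) ⊆ ↑T := by
    intro i
    rw [hT]; intro v hv; simp only [Set.Finite.coe_toFinset]
    exact Or.inr (Set.mem_iUnion.mpr ⟨i, hv⟩)
  have hsubgF : Function.support gF ⊆ ↑T := by
    intro v hv
    by_contra hc
    have h1 : ∀ i, gi i v = 0 := fun i =>
      Function.notMem_support.mp fun hmem => hc (hsubgi i hmem)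
    have h2 : gD v = 0 :=
      Function.notMem_support.mp fun hmem => hc (hsubgD hmem)
    have h4 : (∑ i, gi i v) + gD v = 0 := by
      rw [h2, Finset.sum_congr rfl fun i _ => h1 i]
      simp
    have h5 : gF v ≤ (∑ i, gi i v) + gD v := hfinv v
    rw [h4] at h5
    exact hv (le_antisymm h5 (hgF_nonneg v))
  have hSF : ∑ᶠ v, gF v ≤ (∑ i, ∑ᶠ v, gi i v) + n * Real.log ((D ! : ℕ) : ℝ) := by
    rw [finsum_eq_sum_of_support_subset _ hsubgF, ← hgD_sum,
      finsum_eq_sum_of_support_subset _ hsubgD]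
    have heq : ∀ i, ∑ᶠ v, gi i v = ∑ v ∈ T, gi i v := fun i =>
      finsum_eq_sum_of_support_subset _ (hsubgi i)
    calc ∑ v ∈ T, gF v ≤ ∑ v ∈ T, ((∑ i, gi i v) + gD v) := by
          refine Finset.sum_le_sum fun v _ => ?_
          exact hfinv v
      _ = (∑ i, ∑ v ∈ T, gi i v) + ∑ v ∈ T, gD v := by
          rw [Finset.sum_add_distrib, Finset.sum_comm]
      _ = (∑ i, ∑ᶠ v, gi i v) + ∑ v ∈ T, gD v := by
          rw [Finset.sum_congr rfl fun i _ => (heq i).symm]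
  -- infinite-part assembly
  set Kw : ℝ := Real.log ((d:ℝ)+1) + (d:ℝ) * Real.log (2*(M:ℝ)) with hKw
  have hinfw' : ∀ w : InfinitePlace L, Real.log (max 1 (polyNorm (⇑w) F)) ≤
      (∑ i, Real.log (max 1 (w (F.eval (t i))))) + Kw := by
    intro w
    refine le_trans (hinfw w) ?_
    rw [hKw, Real.log_pow]
    push_cast
    exact le_refl _
  have hmultsum : ∑ w : InfinitePlace L, (InfinitePlace.mult w : ℝ) = n := by
    rw [hndef]
    exact_mod_cast NumberField.InfinitePlace.sum_mult_eq (K := L)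
  have hSI : ∑ w : InfinitePlace L, (InfinitePlace.mult w : ℝ) *
        Real.log (max 1 (polyNorm (⇑w) F)) ≤
      (∑ i, ∑ w : InfinitePlace L, (InfinitePlace.mult w : ℝ) *
        Real.log (max 1 (w (F.eval (t i))))) + n * Kw := by
    calc ∑ w : InfinitePlace L, (InfinitePlace.mult w : ℝ) *
          Real.log (max 1 (polyNorm (⇑w) F))
        ≤ ∑ w : InfinitePlace L, (InfinitePlace.mult w : ℝ) *
          ((∑ i, Real.log (max 1 (w (F.eval (t i))))) + Kw) := by
          refine Finset.sum_le_sum fun w _ => ?_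
          exact mul_le_mul_of_nonneg_left (hinfw' w) (by positivity)
      _ = (∑ w : InfinitePlace L, ∑ i, (InfinitePlace.mult w : ℝ) *
            Real.log (max 1 (w (F.eval (t i))))) +
          (∑ w : InfinitePlace L, (InfinitePlace.mult w : ℝ)) * Kw := by
          rw [Finset.sum_mul, ← Finset.sum_add_distrib]
          refine Finset.sum_congr rfl fun w _ => ?_
          rw [mul_add, Finset.mul_sum]
      _ = (∑ i, ∑ w : InfinitePlace L, (InfinitePlace.mult w : ℝ) *
            Real.log (max 1 (w (F.eval (t i))))) + n * Kw := by
          rw [Finset.sum_comm, hmultsum]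
  -- heights of the values
  have hvals : ∀ i, (∑ᶠ v, gi i v) + ∑ w : InfinitePlace L, (InfinitePlace.mult w : ℝ) *
      Real.log (max 1 (w (F.eval (t i)))) ≤ n * H := by
    intro i
    have h1 := hFx i
    have h2 : elemHeight (F.eval (t i)) = (1/n) * ((∑ᶠ v, gi i v) +
        ∑ w : InfinitePlace L, (InfinitePlace.mult w : ℝ) *
          Real.log (max 1 (w (F.eval (t i))))) := by
      rw [elemHeight, hgi, hndef]
    rw [h2] at h1
    calc (∑ᶠ v, gi i v) + ∑ w : InfinitePlace L, (InfinitePlace.mult w : ℝ) *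
          Real.log (max 1 (w (F.eval (t i))))
        = n * ((1/n) * ((∑ᶠ v, gi i v) + ∑ w : InfinitePlace L,
            (InfinitePlace.mult w : ℝ) * Real.log (max 1 (w (F.eval (t i)))))) := by
          field_simp
      _ ≤ n * H := mul_le_mul_of_nonneg_left h1 hn0.le
  -- final combination
  have htotal : (∑ᶠ v, gF v) + ∑ w : InfinitePlace L, (InfinitePlace.mult w : ℝ) *
      Real.log (max 1 (polyNorm (⇑w) F)) ≤
      n * (((d:ℝ)+1) * H + (D:ℝ) * Real.log (D:ℝ) + (d:ℝ) * Real.log (2*(M:ℝ))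
        + Real.log ((d:ℝ)+1)) := by
    have hstep : (∑ᶠ v, gF v) + ∑ w : InfinitePlace L, (InfinitePlace.mult w : ℝ) *
        Real.log (max 1 (polyNorm (⇑w) F)) ≤
        (∑ i : Fin (d+1), n * H) + n * Real.log ((D ! : ℕ) : ℝ) + n * Kw := by
      have := add_le_add hSF hSI
      refine le_trans this ?_
      have h3 : (∑ i, ∑ᶠ v, gi i v) + (∑ i, ∑ w : InfinitePlace L,
          (InfinitePlace.mult w : ℝ) * Real.log (max 1 (w (F.eval (t i))))) ≤
          ∑ i : Fin (d+1), n * H := by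
        rw [← Finset.sum_add_distrib]
        exact Finset.sum_le_sum fun i _ => hvals i
      linarith
    refine le_trans hstep ?_
    rw [Finset.sum_const, Finset.card_univ, Fintype.card_fin, nsmul_eq_mul]
    have hlogfac : Real.log ((D ! : ℕ) : ℝ) ≤ (D:ℝ) * Real.log (D:ℝ) := log_factorial_le D
    have h6 : n * Real.log ((D ! : ℕ) : ℝ) ≤ n * ((D:ℝ) * Real.log (D:ℝ)) :=
      mul_le_mul_of_nonneg_left hlogfac hn0.le
    have hKw0 : ((d + 1 : ℕ) : ℝ) = (d:ℝ) + 1 := by push_cast; ring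
    rw [hKw, hKw0]
    nlinarith [hn0]
  -- conclude
  rw [polyHeight]
  rw [← hndef, ← hgF]
  have hfinal := htotal
  calc (1/n) * ((∑ᶠ v, gF v) + ∑ w : InfinitePlace L, (InfinitePlace.mult w : ℝ) *
        Real.log (max 1 (polyNorm (⇑w) F)))
      ≤ (1/n) * (n * (((d:ℝ)+1) * H + (D:ℝ) * Real.log (D:ℝ)
          + (d:ℝ) * Real.log (2*(M:ℝ)) + Real.log ((d:ℝ)+1))) := by
        apply mul_le_mul_of_nonneg_left hfinal (by positivity)
    _ = ((d:ℝ)+1) * H + (D:ℝ) * Real.log (D:ℝ) + (d:ℝ) * Real.log (2*(M:ℝ))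
          + Real.log ((d:ℝ)+1) := by
        field_simp
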